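/- Lower-weight bound on posteriors: under the same hypotheses, (μ₀ ⊕ w(ob,·))(h) ≥ (w̲(ob,h)·μ₀(h)) / (w̲(ob,h)·μ₀(h) + Σ_{h'≠h} w̄(ob,h')·μ₀(h')), for every weight w ∈ w_G, provided the denominators are positive. -/

import Mathlib

/-- Lower-weight bound on posteriors in an uncorrelated generalized evidence
space: for each likelihood mapping `μ ∈ Δ`, the Dempster-updated posterior of
`h` is at least `w̲(ob,h)μ₀(h) / (w̲(ob,h)μ₀(h) + Σ_{h'≠h} w̄(ob,h')μ₀(h'))`. -/
theorem posterior_lower_bound {H O : Type*} [Fintype H] [DecidableEq H]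
    (Δ : Finset (H → O → ℝ)) (hΔ : Δ.Nonempty)
    (P : H → Finset (O → ℝ)) (hunc : ∀ μ, μ ∈ Δ ↔ ∀ h, μ h ∈ P h)
    (μ₀ : H → ℝ) (hμ₀nn : ∀ h, 0 ≤ μ₀ h) (hμ₀s : ∑ h, μ₀ h = 1)
    (hlik : ∀ μ ∈ Δ, ∀ h ob, 0 ≤ μ h ob)
    (hposs : ∀ μ ∈ Δ, ∀ ob, 0 < ∑ h, μ h ob)
    (μ : H → O → ℝ) (hμ : μ ∈ Δ) (ob : O) (h : H)
    (hdem : 0 < ∑ h', μ₀ h' * (μ h' ob / ∑ h'', μ h'' ob))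
    (hden : 0 < (Δ.inf' hΔ fun ν => ν h ob / ∑ h'', ν h'' ob) * μ₀ h +
      ∑ h' ∈ Finset.univ.erase h,
        (Δ.sup' hΔ fun ν => ν h' ob / ∑ h'', ν h'' ob) * μ₀ h') :
    (Δ.inf' hΔ fun ν => ν h ob / ∑ h'', ν h'' ob) * μ₀ h /
        ((Δ.inf' hΔ fun ν => ν h ob / ∑ h'', ν h'' ob) * μ₀ h +
          ∑ h' ∈ Finset.univ.erase h,
            (Δ.sup' hΔ fun ν => ν h' ob / ∑ h'', ν h'' ob) * μ₀ h') ≤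
      μ₀ h * (μ h ob / ∑ h'', μ h'' ob) /
        (∑ h', μ₀ h' * (μ h' ob / ∑ h'', μ h'' ob)) := by
  have hS := hposs μ hμ ob
  set w : H → ℝ := fun h' => μ h' ob / ∑ h'', μ h'' ob with hw
  have hwnn : ∀ h', 0 ≤ w h' := fun h' => div_nonneg (hlik μ hμ h' ob) hS.le
  set a : ℝ := Δ.inf' hΔ fun ν => ν h ob / ∑ h'', ν h'' ob with haa
  have hale : a ≤ w h := Finset.inf'_le _ hμ
  have hann : 0 ≤ a := Finset.le_inf' _ _ fun ν hν =>
    div_nonneg (hlik ν hν h ob) (hposs ν hν ob).le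
  have hsup : ∀ h', w h' ≤ Δ.sup' hΔ fun ν => ν h' ob / ∑ h'', ν h'' ob :=
    fun h' => by exact Finset.le_sup' (fun ν => ν h' ob / ∑ h'', ν h'' ob) hμ
  have hsplit : ∑ h', μ₀ h' * w h'
      = μ₀ h * w h + ∑ h' ∈ Finset.univ.erase h, μ₀ h' * w h' :=
    (Finset.add_sum_erase _ _ (Finset.mem_univ h)).symm
  rw [hsplit] at hdem ⊢
  rw [div_le_div_iff₀ hden hdem]
  have hDnn : 0 ≤ ∑ h' ∈ Finset.univ.erase h, μ₀ h' * w h' :=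
    Finset.sum_nonneg fun h' _ => mul_nonneg (hμ₀nn h') (hwnn h')
  have hDB : ∑ h' ∈ Finset.univ.erase h, μ₀ h' * w h'
      ≤ ∑ h' ∈ Finset.univ.erase h,
        (Δ.sup' hΔ fun ν => ν h' ob / ∑ h'', ν h'' ob) * μ₀ h' := by
    refine Finset.sum_le_sum fun h' _ => ?_
    rw [mul_comm]
    exact mul_le_mul_of_nonneg_right (hsup h') (hμ₀nn h')
  have key : (a * μ₀ h) * (∑ h' ∈ Finset.univ.erase h, μ₀ h' * w h')
      ≤ (μ₀ h * w h) * (∑ h' ∈ Finset.univ.erase h,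
        (Δ.sup' hΔ fun ν => ν h' ob / ∑ h'', ν h'' ob) * μ₀ h') := by
    have h1 : a * μ₀ h ≤ μ₀ h * w h := by
      rw [mul_comm]
      exact mul_le_mul_of_nonneg_left hale (hμ₀nn h)
    exact mul_le_mul h1 hDB hDnn (mul_nonneg (hμ₀nn h) (hwnn h))
  nlinarith [mul_nonneg hann (hμ₀nn h)]
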